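/- Let n ≥ 20 be an integer. Then π_{(n,n)}((1,1)) ≤ 2 · (sup_{t≥0} Pr_1^t[w(t) = n, MAX(w) = n, and MIN(w) ≥ 1]) · (Σ_{t≥0} Pr_1^t[w(t) = n, MAX(w) = n, and MIN(w) ≥ 1]), where the supremum and the (convergent) sum are over all nonnegative integers t. -/

import Mathlib

/-- A grid walk of length `t` from `v ∈ ℤ²`: a function on `{0,…,t}` starting at `v`
whose consecutive values differ by exactly `1` in `ℓ¹`-norm. -/
def IsGridWalk (v : ℤ × ℤ) (t : ℕ) (w : Fin (t + 1) → ℤ × ℤ) : Prop :=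
  w 0 = v ∧ ∀ j : Fin t,
    |(w j.succ).1 - (w j.castSucc).1| + |(w j.succ).2 - (w j.castSucc).2| = 1

/-- Membership in the box `B = {1,…,n}²`. -/
def InBox (n : ℕ) (p : ℤ × ℤ) : Prop :=
  1 ≤ p.1 ∧ p.1 ≤ (n : ℤ) ∧ 1 ≤ p.2 ∧ p.2 ≤ (n : ℤ)

/-- `N_t(v, u)`: the number of grid walks of length `t` from `v` staying in `B \ {u}`
before time `t` and ending at `u` at time `t`. -/
noncomputable def gridHitCount (n : ℕ) (v u : ℤ × ℤ) (t : ℕ) : ℕ :=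
  {w : Fin (t + 1) → ℤ × ℤ | IsGridWalk v t w ∧
    (∀ j : Fin t, InBox n (w j.castSucc) ∧ w j.castSucc ≠ u) ∧
    w (Fin.last t) = u}.ncard

/-- The potential `π_u(v) = Σ_{t ≥ 0} N_t(v,u) / 4^t`. -/
noncomputable def gridPotential (n : ℕ) (u v : ℤ × ℤ) : ℝ :=
  ∑' t : ℕ, (gridHitCount n v u t : ℝ) / 4 ^ t

/-- A 1D walk of length `t` started at `i`: a function on `{0,…,t}` starting at `i`
whose consecutive values differ by exactly `1`. -/
def IsWalk (i : ℤ) (t : ℕ) (w : Fin (t + 1) → ℤ) : Prop :=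
  w 0 = i ∧ ∀ j : Fin t, |w j.succ - w j.castSucc| = 1

/-- The number of walks of length `t` started at `i` satisfying `P`. -/
noncomputable def walkCount (i : ℤ) (t : ℕ) (P : (Fin (t + 1) → ℤ) → Prop) : ℕ :=
  {w : Fin (t + 1) → ℤ | IsWalk i t w ∧ P w}.ncard

/-- `Pr_i^t[P]`: the number of walks of length `t` started at `i` satisfying `P`,
divided by `2 ^ t`. -/
noncomputable def walkProb (i : ℤ) (t : ℕ) (P : (Fin (t + 1) → ℤ) → Prop) : ℝ :=
  (walkCount i t P : ℝ) / 2 ^ t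

/-- `w(t) = n`. -/
def endsAt {t : ℕ} (n : ℤ) (w : Fin (t + 1) → ℤ) : Prop := w (Fin.last t) = n

/-- `MAX(w) = n`. -/
def maxEq {t : ℕ} (n : ℤ) (w : Fin (t + 1) → ℤ) : Prop :=
  (∀ j, w j ≤ n) ∧ ∃ j, w j = n

/-- `MIN(w) ≥ m`. -/
def minGE {t : ℕ} (m : ℤ) (w : Fin (t + 1) → ℤ) : Prop := ∀ j, m ≤ w j

namespace RW
open Finset

open Finset


def sgn (b : Bool) : ℤ := if b then 1 else -1

lemma sgn_abs (b : Bool) : |sgn b| = 1 := by cases b <;> simp [sgn]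

def psum (i : ℤ) {t : ℕ} (ε : Fin t → Bool) (j : Fin (t + 1)) : ℤ :=
  i + ∑ k ∈ univ.filter (fun k : Fin t => (k : ℕ) < (j : ℕ)), sgn (ε k)

lemma filter_lt_succ {t : ℕ} (j : ℕ) (hj : j < t) :
    (univ.filter (fun k : Fin t => (k : ℕ) < j + 1)) =
      insert ⟨j, hj⟩ (univ.filter (fun k : Fin t => (k : ℕ) < j)) := by
  ext k
  simp only [mem_filter, mem_univ, true_and, mem_insert]
  constructor
  · intro h
    rcases Nat.lt_succ_iff_lt_or_eq.1 h with h | h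
    · exact Or.inr (by simpa using h)
    · exact Or.inl (by ext; simpa using h)
  · rintro (rfl | h)
    · simp
    · exact Nat.lt_succ_of_lt h

lemma psum_zero (i : ℤ) {t : ℕ} (ε : Fin t → Bool) : psum i ε 0 = i := by
  simp [psum]

lemma psum_succ (i : ℤ) {t : ℕ} (ε : Fin t → Bool) (j : Fin t) :
    psum i ε j.succ = psum i ε j.castSucc + sgn (ε j) := by
  unfold psum
  rw [show ((j.succ : Fin (t+1)) : ℕ) = (j : ℕ) + 1 from rfl,
    show ((j.castSucc : Fin (t+1)) : ℕ) = (j : ℕ) from rfl,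
    filter_lt_succ (j : ℕ) j.2, sum_insert (by simp)]
  have : (⟨(j : ℕ), j.2⟩ : Fin t) = j := by ext; rfl
  rw [this]; ring

lemma isWalk_psum (i : ℤ) {t : ℕ} (ε : Fin t → Bool) : IsWalk i t (psum i ε) := by
  refine ⟨psum_zero i ε, fun j => ?_⟩
  rw [psum_succ]
  simpa using sgn_abs (ε j)

def stepsOf {t : ℕ} (w : Fin (t + 1) → ℤ) : Fin t → Bool :=
  fun j => decide (w j.castSucc < w j.succ)

lemma psum_stepsOf {i : ℤ} {t : ℕ} {w : Fin (t + 1) → ℤ} (hw : IsWalk i t w) :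
    psum i (stepsOf w) = w := by
  funext j
  induction j using Fin.induction with
  | zero => rw [psum_zero, hw.1]
  | succ j ih =>
      rw [psum_succ, ih]
      have h := hw.2 j
      rcases abs_eq (by norm_num : (0:ℤ) ≤ 1) |>.1 h with h1 | h1
      · have : stepsOf w j = true := by
          simp [stepsOf]; omega
        rw [this]; simp [sgn]; omega
      · have : stepsOf w j = false := by
          simp [stepsOf]; omega
        rw [this]; simp [sgn]; omega

lemma stepsOf_psum (i : ℤ) {t : ℕ} (ε : Fin t → Bool) : stepsOf (psum i ε) = ε := by
  funext j
  have h := psum_succ i ε j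
  cases hj : ε j <;> simp [stepsOf, h, hj, sgn]

lemma psum_injective (i : ℤ) (t : ℕ) : Function.Injective (psum i (t := t)) :=
  Function.LeftInverse.injective (g := stepsOf) (fun ε => stepsOf_psum i ε)

open Classical in
lemma walkCount_eq (i : ℤ) (t : ℕ) (P : (Fin (t + 1) → ℤ) → Prop) :
    walkCount i t P = (univ.filter fun ε : Fin t → Bool => P (psum i ε)).card := by
  have hset : {w : Fin (t + 1) → ℤ | IsWalk i t w ∧ P w} =
      (psum i) '' {ε : Fin t → Bool | P (psum i ε)} := by
    ext w
    constructor
    · rintro ⟨hw, hP⟩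
      exact ⟨stepsOf w, by rw [Set.mem_setOf_eq, psum_stepsOf hw]; exact hP, psum_stepsOf hw⟩
    · rintro ⟨ε, hε, rfl⟩
      exact ⟨isWalk_psum i ε, hε⟩
  rw [walkCount, hset, Set.ncard_image_of_injective _ (psum_injective i t)]
  rw [← Set.ncard_coe_finset]
  congr 1
  ext ε
  simp


lemma filter_and_comm {t : ℕ} (p : Fin t → Prop) [DecidablePred p] (m : ℕ) :
    (univ.filter (fun k : Fin t => (k : ℕ) < m ∧ p k)) =
      (univ.filter (fun k : Fin t => (k : ℕ) < m)).filter p := by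
  ext k; simp [and_comm]

lemma sum_and_eq {t : ℕ} (p : Fin t → Prop) [DecidablePred p] (g : Fin t → ℤ) (m : ℕ) :
    ∑ k ∈ univ.filter (fun k : Fin t => (k : ℕ) < m ∧ p k), g k =
      ∑ k ∈ univ.filter (fun k : Fin t => (k : ℕ) < m), (if p k then g k else 0) := by
  rw [filter_and_comm, sum_filter]

lemma sum_lt_succ {t : ℕ} (g : Fin t → ℤ) (j : Fin t) :
    ∑ k ∈ univ.filter (fun k : Fin t => (k : ℕ) < (j : ℕ) + 1), g k =
      (∑ k ∈ univ.filter (fun k : Fin t => (k : ℕ) < (j : ℕ)), g k) + g j := by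
  rw [filter_lt_succ (j : ℕ) j.2, sum_insert (by simp)]
  have : (⟨(j : ℕ), j.2⟩ : Fin t) = j := by ext; rfl
  rw [this, add_comm]

def gstep (d : Bool × Bool) : ℤ × ℤ := if d.1 then (sgn d.2, 0) else (0, sgn d.2)

def gpsum (v : ℤ × ℤ) {t : ℕ} (d : Fin t → Bool × Bool) (j : Fin (t + 1)) : ℤ × ℤ :=
  (v.1 + ∑ k ∈ univ.filter (fun k : Fin t => (k : ℕ) < (j : ℕ) ∧ (d k).1), sgn (d k).2,
   v.2 + ∑ k ∈ univ.filter (fun k : Fin t => (k : ℕ) < (j : ℕ) ∧ ¬(d k).1), sgn (d k).2)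

lemma gpsum_zero (v : ℤ × ℤ) {t : ℕ} (d : Fin t → Bool × Bool) : gpsum v d 0 = v := by
  have h1 : univ.filter (fun k : Fin t => (k : ℕ) < ((0 : Fin (t+1)) : ℕ) ∧ (d k).1) = ∅ := by
    ext k; simp
  have h2 : univ.filter (fun k : Fin t => (k : ℕ) < ((0 : Fin (t+1)) : ℕ) ∧ ¬(d k).1) = ∅ := by
    ext k; simp
  simp [gpsum, h1, h2]

lemma gpsum_succ (v : ℤ × ℤ) {t : ℕ} (d : Fin t → Bool × Bool) (j : Fin t) :
    gpsum v d j.succ = gpsum v d j.castSucc + gstep (d j) := by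
  have hs : ((j.succ : Fin (t+1)) : ℕ) = (j : ℕ) + 1 := rfl
  have hc : ((j.castSucc : Fin (t+1)) : ℕ) = (j : ℕ) := rfl
  unfold gpsum
  rw [hs, hc, sum_and_eq (fun k => (d k).1 = true), sum_and_eq (fun k => ¬(d k).1 = true),
    sum_lt_succ, sum_lt_succ, ← sum_and_eq (fun k => (d k).1 = true), ← sum_and_eq (fun k => ¬(d k).1 = true)]
  cases hd : (d j).1 <;> simp [gstep, hd, Prod.ext_iff] <;> ring

def gstepsOf {t : ℕ} (w : Fin (t + 1) → ℤ × ℤ) : Fin t → Bool × Bool :=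
  fun j => ((w j.succ).1 ≠ (w j.castSucc).1,
    decide (0 < (w j.succ).1 - (w j.castSucc).1 + ((w j.succ).2 - (w j.castSucc).2)))

lemma gpsum_gstepsOf {v : ℤ × ℤ} {t : ℕ} {w : Fin (t + 1) → ℤ × ℤ} (hw : IsGridWalk v t w) :
    gpsum v (gstepsOf w) = w := by
  funext j
  induction j using Fin.induction with
  | zero => rw [gpsum_zero, hw.1]
  | succ j ih =>
      rw [gpsum_succ, ih]
      have h := hw.2 j
      set dx := (w j.succ).1 - (w j.castSucc).1 with hdx
      set dy := (w j.succ).2 - (w j.castSucc).2 with hdy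
      have hcases : (dx = 1 ∧ dy = 0) ∨ (dx = -1 ∧ dy = 0) ∨ (dx = 0 ∧ dy = 1) ∨ (dx = 0 ∧ dy = -1) := by
        rcases abs_cases dx with ⟨h1, _⟩ | ⟨h1, _⟩ <;> rcases abs_cases dy with ⟨h2, _⟩ | ⟨h2, _⟩ <;> omega
      have hexp : w j.succ = w j.castSucc + (dx, dy) := by
        rw [hdx, hdy]; ext <;> simp
      rcases hcases with ⟨h1, h2⟩ | ⟨h1, h2⟩ | ⟨h1, h2⟩ | ⟨h1, h2⟩ <;> rw [hexp, h1, h2]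
      · have hd : gstepsOf w j = (true, true) := by
          simp only [gstepsOf, Prod.mk.injEq, decide_eq_true_eq]
          constructor
          · simp only [ne_eq, decide_eq_true_eq]; omega
          · omega
        rw [hd]; norm_num [gstep, sgn]
      · have hd : gstepsOf w j = (true, false) := by
          simp only [gstepsOf, Prod.mk.injEq]
          constructor
          · simp only [ne_eq, decide_eq_true_eq]; omega
          · simp only [decide_eq_false_iff_not]; omega
        rw [hd]; norm_num [gstep, sgn]
      · have hd : gstepsOf w j = (false, true) := by
          simp only [gstepsOf, Prod.mk.injEq]
          constructor
          · simp only [ne_eq, decide_eq_false_iff_not, not_not]; omega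
          · simp only [decide_eq_true_eq]; omega
        rw [hd]; norm_num [gstep, sgn]
      · have hd : gstepsOf w j = (false, false) := by
          simp only [gstepsOf, Prod.mk.injEq]
          constructor
          · simp only [ne_eq, decide_eq_false_iff_not, not_not]; omega
          · simp only [decide_eq_false_iff_not]; omega
        rw [hd]; norm_num [gstep, sgn]


open Classical in
lemma gridHitCount_le_card (n t : ℕ) :
    gridHitCount n (1, 1) ((n : ℤ), (n : ℤ)) t ≤
      (univ.filter (fun d : Fin t → Bool × Bool =>
        (∀ j : Fin t, InBox n (gpsum (1, 1) d j.castSucc)) ∧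
        gpsum (1, 1) d (Fin.last t) = ((n : ℤ), (n : ℤ)))).card := by
  set D := univ.filter (fun d : Fin t → Bool × Bool =>
        (∀ j : Fin t, InBox n (gpsum (1, 1) d j.castSucc)) ∧
        gpsum (1, 1) d (Fin.last t) = ((n : ℤ), (n : ℤ))) with hD
  have hsub : {w : Fin (t + 1) → ℤ × ℤ | IsGridWalk (1, 1) t w ∧
      (∀ j : Fin t, InBox n (w j.castSucc) ∧ w j.castSucc ≠ ((n : ℤ), (n : ℤ))) ∧
      w (Fin.last t) = ((n : ℤ), (n : ℤ))} ⊆ (fun d => gpsum (1, 1) d) '' (D : Set (Fin t → Bool × Bool)) := by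
    rintro w ⟨hw, hbox, hend⟩
    refine ⟨gstepsOf w, ?_, gpsum_gstepsOf hw⟩
    simp only [hD, coe_filter, Set.mem_setOf_eq, mem_univ, true_and]
    rw [gpsum_gstepsOf hw]
    exact ⟨fun j => (hbox j).1, hend⟩
  have h1 : gridHitCount n (1, 1) ((n : ℤ), (n : ℤ)) t ≤
      ((fun d => gpsum (1, 1) d) '' (D : Set (Fin t → Bool × Bool))).ncard :=
    Set.ncard_le_ncard hsub (D.finite_toSet.image _)
  have h2 := Set.ncard_image_le (f := fun d => gpsum (1, 1) d) D.finite_toSet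
  have h3 := Set.ncard_coe_finset D
  omega

section Bridge
variable {t s : ℕ} (S : Finset (Fin t)) (hcard : S.card = s)

open Classical

lemma mem_iff_lt_countBelow (m : ℕ) (l : Fin s) :
    ((S.orderEmbOfFin hcard l : Fin t) : ℕ) < m ↔
      (l : ℕ) < (S.filter (fun k : Fin t => (k : ℕ) < m)).card := by
  set emb := S.orderEmbOfFin hcard with hemb
  set A : Finset (Fin s) := univ.filter (fun l => ((emb l : Fin t) : ℕ) < m) with hA
  have hAmem : ∀ l : Fin s, l ∈ A ↔ ((emb l : Fin t) : ℕ) < m := by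
    intro l; simp [hA]
  have himg : S.filter (fun k : Fin t => (k : ℕ) < m) = A.image emb := by
    ext k
    simp only [mem_filter, mem_image]
    constructor
    · rintro ⟨hkS, hkm⟩
      have : k ∈ Set.range emb := by rw [hemb, Finset.range_orderEmbOfFin]; exact hkS
      obtain ⟨l, rfl⟩ := this
      exact ⟨l, (hAmem l).2 hkm, rfl⟩
    · rintro ⟨l, hl, rfl⟩
      exact ⟨Finset.orderEmbOfFin_mem S hcard l, (hAmem l).1 hl⟩
  have hcardA : (S.filter (fun k : Fin t => (k : ℕ) < m)).card = A.card := by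
    rw [himg, card_image_of_injective _ (emb.injective)]
  rw [hcardA]
  constructor
  · intro h
    have hsubA : Finset.Iic l ⊆ A := by
      intro l' hl'
      rw [hAmem]
      have : emb l' ≤ emb l := emb.monotone (Finset.mem_Iic.1 hl')
      have hv : ((emb l' : Fin t) : ℕ) ≤ ((emb l : Fin t) : ℕ) := this
      omega
    have := card_le_card hsubA
    rw [Fin.card_Iic] at this
    omega
  · intro h
    by_contra hc
    have hsubA : A ⊆ Finset.Iio l := by
      intro l' hl'
      rw [Finset.mem_Iio]
      by_contra hge
      apply hc
      have : emb l ≤ emb l' := emb.monotone (not_lt.1 hge)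
      have hv : ((emb l : Fin t) : ℕ) ≤ ((emb l' : Fin t) : ℕ) := this
      have hm := (hAmem l').1 hl'
      omega
    have := card_le_card hsubA
    rw [Fin.card_Iio] at this
    omega

lemma sum_compress (g : Fin t → ℤ) (m : ℕ) :
    ∑ k ∈ S.filter (fun k : Fin t => (k : ℕ) < m), g k =
      ∑ l ∈ univ.filter
          (fun l : Fin s => (l : ℕ) < (S.filter (fun k : Fin t => (k : ℕ) < m)).card),
        g (S.orderEmbOfFin hcard l) := by
  set emb := S.orderEmbOfFin hcard with hemb
  have himg : S.filter (fun k : Fin t => (k : ℕ) < m) =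
      (univ.filter (fun l : Fin s =>
        (l : ℕ) < (S.filter (fun k : Fin t => (k : ℕ) < m)).card)).image emb := by
    ext k
    simp only [mem_filter, mem_image, mem_univ, true_and]
    constructor
    · rintro ⟨hkS, hkm⟩
      have : k ∈ Set.range emb := by rw [hemb, Finset.range_orderEmbOfFin]; exact hkS
      obtain ⟨l, rfl⟩ := this
      exact ⟨l, (mem_iff_lt_countBelow S hcard m l).1 hkm, rfl⟩
    · rintro ⟨l, hl, rfl⟩
      exact ⟨Finset.orderEmbOfFin_mem S hcard l, (mem_iff_lt_countBelow S hcard m l).2 hl⟩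
  conv_lhs => rw [himg]
  rw [sum_image (fun x _ y _ h => emb.injective h)]

end Bridge

open Classical

noncomputable def good (n s : ℕ) : Finset (Fin s → Bool) :=
  univ.filter (fun ε => endsAt (n : ℤ) (psum 1 ε) ∧ maxEq (n : ℤ) (psum 1 ε) ∧ minGE 1 (psum 1 ε))

lemma walkCount_eq_good (n s : ℕ) :
    walkCount 1 s (fun w => endsAt (n : ℤ) w ∧ maxEq (n : ℤ) w ∧ minGE 1 w) = (good n s).card := by
  rw [walkCount_eq]
  unfold good
  congr

lemma coord_good (n t : ℕ) (hn1 : 1 ≤ n) (S : Finset (Fin t)) (g : Fin t → Bool)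
    (x : Fin (t + 1) → ℤ)
    (hx : ∀ j : Fin (t + 1),
      x j = 1 + ∑ k ∈ S.filter (fun k : Fin t => (k : ℕ) < (j : ℕ)), sgn (g k))
    (hbox : ∀ j : Fin t, 1 ≤ x j.castSucc ∧ x j.castSucc ≤ (n : ℤ))
    (hend : x (Fin.last t) = (n : ℤ)) :
    (fun l : Fin S.card => g (S.orderEmbOfFin rfl l)) ∈ good n S.card := by
  set s := S.card with hs
  set emb := S.orderEmbOfFin (rfl : S.card = s) with hembdef
  set ε : Fin s → Bool := fun l => g (emb l) with hε
  set xw : Fin (s + 1) → ℤ := psum 1 ε with hxw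
  have hkey : ∀ k : Fin (s + 1),
      xw k = 1 + ∑ l ∈ univ.filter (fun l : Fin s => (l : ℕ) < (k : ℕ)), sgn (g (emb l)) := by
    intro k; rfl
  -- last value
  have hfull : S.filter (fun k : Fin t => (k : ℕ) < t) = S := by
    apply filter_true_of_mem; intro k _; exact k.2
  have hlast : xw (Fin.last s) = x (Fin.last t) := by
    have hxl : x (Fin.last t) = 1 + ∑ k ∈ S.filter (fun k : Fin t => (k : ℕ) < t), sgn (g k) := by
      have := hx (Fin.last t); simpa using this
    rw [hxl, sum_compress S rfl (fun k' => sgn (g k')) t, hfull]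
    rfl
  -- intermediate values
  have hmid : ∀ k : Fin (s + 1), ∀ h : (k : ℕ) < s,
      xw k = x ((emb ⟨(k : ℕ), h⟩).castSucc) := by
    intro k h
    set kk : Fin s := ⟨(k : ℕ), h⟩ with hkk
    have hxj : x ((emb kk).castSucc) =
        1 + ∑ k' ∈ S.filter (fun k' : Fin t => (k' : ℕ) < ((emb kk : Fin t) : ℕ)), sgn (g k') := by
      have := hx ((emb kk).castSucc); simpa using this
    have hc : (S.filter (fun k' : Fin t => (k' : ℕ) < ((emb kk : Fin t) : ℕ))).card = (k : ℕ) := by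
      have hiff := fun l : Fin s =>
        mem_iff_lt_countBelow S (rfl : S.card = s) ((emb kk : Fin t) : ℕ) l
      set c := (S.filter (fun k' : Fin t => (k' : ℕ) < ((emb kk : Fin t) : ℕ))).card with hcdef
      rcases lt_trichotomy c ((kk : Fin s) : ℕ) with hlt | heq | hgt
      · exfalso
        have hcs : c < s := lt_trans hlt kk.isLt
        have hlt' : (⟨c, hcs⟩ : Fin s) < kk := by rw [Fin.lt_def]; exact hlt
        have hm := emb.strictMono hlt'
        rw [Fin.lt_def] at hm
        have := (hiff ⟨c, hcs⟩).1 hm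
        exact absurd this (lt_irrefl c)
      · exact heq
      · exact absurd ((hiff kk).2 hgt) (lt_irrefl _)
    rw [hxj, sum_compress S rfl (fun k' => sgn (g k')) ((emb kk : Fin t) : ℕ), hc]
    exact hkey k
  -- now verify the three properties
  simp only [good, mem_filter, mem_univ, true_and]
  refine ⟨?_, ⟨?_, ⟨Fin.last s, ?_⟩⟩, ?_⟩
  · show psum 1 ε (Fin.last s) = (n : ℤ)
    rw [← hxw, hlast, hend]
  · intro k
    show psum 1 ε k ≤ (n : ℤ)
    rw [← hxw]
    by_cases h : (k : ℕ) < s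
    · rw [hmid k h]; exact (hbox _).2
    · have : k = Fin.last s := by
        apply Fin.ext; simp only [Fin.val_last]; omega
      rw [this, hlast, hend]
  · show psum 1 ε (Fin.last s) = (n : ℤ)
    rw [← hxw, hlast, hend]
  · intro k
    show (1 : ℤ) ≤ psum 1 ε k
    rw [← hxw]
    by_cases h : (k : ℕ) < s
    · rw [hmid k h]; exact (hbox _).1
    · have : k = Fin.last s := by
        apply Fin.ext; simp only [Fin.val_last]; omega
      rw [this, hlast, hend]
      exact_mod_cast hn1

lemma card_fiber_le (n t : ℕ) (hn1 : 1 ≤ n) (T : Finset (Fin t)) :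
    ((univ.filter (fun d : Fin t → Bool × Bool =>
        (∀ j : Fin t, InBox n (gpsum (1, 1) d j.castSucc)) ∧
        gpsum (1, 1) d (Fin.last t) = ((n : ℤ), (n : ℤ)))).filter
      (fun d => univ.filter (fun k : Fin t => (d k).1 = true) = T)).card ≤
      (good n T.card).card * (good n Tᶜ.card).card := by
  rw [← card_product]
  apply card_le_card_of_injOn
    (fun d => (fun l => (d (T.orderEmbOfFin rfl l)).2, fun l => (d (Tᶜ.orderEmbOfFin rfl l)).2))
  · intro d hd
    simp only [mem_coe, mem_filter, mem_univ, true_and] at hd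
    obtain ⟨⟨hbox, hend⟩, hT⟩ := hd
    rw [mem_coe, mem_product]
    have hmemT : ∀ k, (d k).1 = true ↔ k ∈ T := by
      intro k; rw [← hT]; simp
    constructor
    · apply coord_good n t hn1 T (fun k => (d k).2) (fun j => (gpsum (1, 1) d j).1)
      · intro j
        have hset : T.filter (fun k : Fin t => (k : ℕ) < (j : ℕ)) =
            univ.filter (fun k : Fin t => (k : ℕ) < (j : ℕ) ∧ (d k).1) := by
          ext k
          simp only [mem_filter, mem_univ, true_and]
          rw [← hmemT k]
          tauto
        show (gpsum (1, 1) d j).1 = _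
        rw [hset]
        rfl
      · intro j
        have := hbox j
        exact ⟨this.1, this.2.1⟩
      · rw [Prod.ext_iff] at hend
        exact hend.1
    · apply coord_good n t hn1 Tᶜ (fun k => (d k).2) (fun j => (gpsum (1, 1) d j).2)
      · intro j
        have hset : Tᶜ.filter (fun k : Fin t => (k : ℕ) < (j : ℕ)) =
            univ.filter (fun k : Fin t => (k : ℕ) < (j : ℕ) ∧ ¬(d k).1) := by
          ext k
          simp only [mem_filter, mem_univ, true_and, mem_compl]
          rw [← hmemT k]
          simp only [Bool.not_eq_true]
          tauto
        show (gpsum (1, 1) d j).2 = _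
        rw [hset]
        rfl
      · intro j
        have := hbox j
        exact ⟨this.2.2.1, this.2.2.2⟩
      · rw [Prod.ext_iff] at hend
        exact hend.2
  · intro d hd d' hd' heq
    simp only [mem_coe, mem_filter, mem_univ, true_and] at hd hd'
    obtain ⟨-, hT⟩ := hd
    obtain ⟨-, hT'⟩ := hd'
    have hmem : ∀ k, (d k).1 = true ↔ k ∈ T := by intro k; rw [← hT]; simp
    have hmem' : ∀ k, (d' k).1 = true ↔ k ∈ T := by intro k; rw [← hT']; simp
    have h1 := congrArg Prod.fst heq
    have h2 := congrArg Prod.snd heq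
    simp only at h1 h2
    funext k
    by_cases hk : k ∈ T
    · have : k ∈ Set.range (T.orderEmbOfFin (rfl : T.card = T.card)) := by
        rw [Finset.range_orderEmbOfFin]; exact hk
      obtain ⟨l, rfl⟩ := this
      have e2 := congrFun h1 l
      apply Prod.ext
      · rw [(hmem _).2 hk, (hmem' _).2 hk]
      · exact e2
    · have hkc : k ∈ Tᶜ := mem_compl.2 hk
      have : k ∈ Set.range (Tᶜ.orderEmbOfFin (rfl : Tᶜ.card = Tᶜ.card)) := by
        rw [Finset.range_orderEmbOfFin]; exact hkc
      obtain ⟨l, rfl⟩ := this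
      have e2 := congrFun h2 l
      apply Prod.ext
      · have hne : ¬ (d _).1 = true := fun hc => hk ((hmem _).1 hc)
        have hne' : ¬ (d' _).1 = true := fun hc => hk ((hmem' _).1 hc)
        rw [Bool.not_eq_true] at hne hne'
        rw [hne, hne']
      · exact e2

lemma grid_card_le (n t : ℕ) (hn1 : 1 ≤ n) :
    (univ.filter (fun d : Fin t → Bool × Bool =>
        (∀ j : Fin t, InBox n (gpsum (1, 1) d j.castSucc)) ∧
        gpsum (1, 1) d (Fin.last t) = ((n : ℤ), (n : ℤ)))).card ≤
      ∑ s ∈ range (t + 1), t.choose s * ((good n s).card * (good n (t - s)).card) := by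
  rw [card_eq_sum_card_fiberwise
    (f := fun d : Fin t → Bool × Bool => univ.filter (fun k : Fin t => (d k).1 = true))
    (t := univ) (fun x _ => mem_univ _)]
  have hle : ∀ T : Finset (Fin t),
      ((univ.filter (fun d : Fin t → Bool × Bool =>
        (∀ j : Fin t, InBox n (gpsum (1, 1) d j.castSucc)) ∧
        gpsum (1, 1) d (Fin.last t) = ((n : ℤ), (n : ℤ)))).filter
          (fun d => univ.filter (fun k : Fin t => (d k).1 = true) = T)).card ≤
        (good n T.card).card * (good n (t - T.card)).card := by
    intro T
    have h := card_fiber_le n t hn1 T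
    rwa [card_compl, Fintype.card_fin] at h
  calc ∑ T ∈ (univ : Finset (Finset (Fin t))),
        ((univ.filter (fun d : Fin t → Bool × Bool =>
          (∀ j : Fin t, InBox n (gpsum (1, 1) d j.castSucc)) ∧
          gpsum (1, 1) d (Fin.last t) = ((n : ℤ), (n : ℤ)))).filter
            (fun d => univ.filter (fun k : Fin t => (d k).1 = true) = T)).card
      ≤ ∑ T ∈ (univ : Finset (Finset (Fin t))), (good n T.card).card * (good n (t - T.card)).card :=
        sum_le_sum (fun T _ => hle T)
    _ = ∑ s ∈ range (t + 1), ∑ T ∈ (univ : Finset (Finset (Fin t))).filter (fun T => T.card = s),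
          (good n T.card).card * (good n (t - T.card)).card := by
        rw [sum_fiberwise_of_maps_to (g := fun T : Finset (Fin t) => T.card)]
        intro T _
        rw [mem_range]
        have : T.card ≤ t := by
          have := card_le_card (subset_univ T)
          simpa using this
        omega
    _ = ∑ s ∈ range (t + 1), t.choose s * ((good n s).card * (good n (t - s)).card) := by
        apply sum_congr rfl
        intro s _
        have hconst : ∀ T ∈ (univ : Finset (Finset (Fin t))).filter (fun T => T.card = s),
            (good n T.card).card * (good n (t - T.card)).card =
            (good n s).card * (good n (t - s)).card := by
          intro T hT
          rw [mem_filter] at hT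
          rw [hT.2]
        rw [sum_congr rfl hconst, sum_const, smul_eq_mul]
        congr 1
        have : (univ : Finset (Finset (Fin t))).filter (fun T => T.card = s) =
            powersetCard s (univ : Finset (Fin t)) := by
          ext T
          simp [mem_powersetCard]
        rw [this, card_powersetCard]
        simp

open Classical

lemma good_card_le (n s : ℕ) : (good n s).card ≤ 2 ^ s := by
  calc (good n s).card ≤ (univ : Finset (Fin s → Bool)).card := card_filter_le _ _
    _ = 2 ^ s := by simp [card_univ]

lemma psum_mk_succ (i : ℤ) {t : ℕ} (ε : Fin t → Bool) (j : ℕ) (hj : j < t) :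
    psum i ε ⟨j + 1, by omega⟩ = psum i ε ⟨j, by omega⟩ + sgn (ε ⟨j, hj⟩) :=
  psum_succ i ε ⟨j, hj⟩

lemma psum_congr {t1 t2 : ℕ} (i : ℤ) (ε1 : Fin t1 → Bool) (ε2 : Fin t2 → Bool) (m : ℕ)
    (hagree : ∀ k : ℕ, k < m → ∀ (h1 : k < t1) (h2 : k < t2), ε1 ⟨k, h1⟩ = ε2 ⟨k, h2⟩)
    (hm1 : m ≤ t1) (hm2 : m ≤ t2) :
    ∀ j : ℕ, ∀ hj : j ≤ m,
      psum i ε1 ⟨j, by omega⟩ = psum i ε2 ⟨j, by omega⟩ := by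
  intro j
  induction j with
  | zero => intro _; rw [show (⟨0, by omega⟩ : Fin (t1+1)) = 0 from rfl,
      show (⟨0, by omega⟩ : Fin (t2+1)) = 0 from rfl, psum_zero, psum_zero]
  | succ j ih =>
      intro hjm
      have hj1 : j < t1 := by omega
      have hj2 : j < t2 := by omega
      rw [psum_mk_succ i ε1 j hj1, psum_mk_succ i ε2 j hj2, ih (by omega),
        hagree j (by omega) hj1 hj2]

lemma firstpassage (n M : ℕ) :
    ∑ s ∈ range M, (good n s).card * 2 ^ (M - 1 - s) ≤ 2 ^ M := by
  set FP : ℕ → Finset (Fin M → Bool) := fun s => univ.filter (fun η =>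
    ∀ j : Fin (M + 1), ((j : ℕ) ≤ s → psum 1 η j ≤ (n : ℤ)) ∧
      ((j : ℕ) = s + 1 → psum 1 η j = (n : ℤ) + 1)) with hFP
  have hinj : ∀ s ∈ range M, (good n s).card * 2 ^ (M - 1 - s) ≤ (FP s).card := by
    intro s hs
    rw [mem_range] at hs
    have hcard : ((good n s) ×ˢ (univ : Finset (Fin (M - 1 - s) → Bool))).card =
        (good n s).card * 2 ^ (M - 1 - s) := by
      rw [card_product, card_univ]
      simp
    rw [← hcard]
    apply card_le_card_of_injOn
      (fun (p : (Fin s → Bool) × (Fin (M - 1 - s) → Bool)) (j : Fin M) =>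
      if h : (j : ℕ) < s then p.1 ⟨(j : ℕ), h⟩
      else if h2 : (j : ℕ) = s then true
      else p.2 ⟨(j : ℕ) - s - 1, by omega⟩)
    · intro p hp
      rw [mem_coe, mem_product] at hp
      have hgood := hp.1
      simp only [good, mem_filter, mem_univ, true_and] at hgood
      obtain ⟨hendp, hmaxp, hminp⟩ := hgood
      set η : Fin M → Bool := fun j =>
        if h : (j : ℕ) < s then p.1 ⟨(j : ℕ), h⟩
        else if h2 : (j : ℕ) = s then true
        else p.2 ⟨(j : ℕ) - s - 1, by omega⟩ with hη
      have hagree : ∀ k : ℕ, k < s → ∀ (h1 : k < M) (h2 : k < s),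
          η ⟨k, h1⟩ = p.1 ⟨k, h2⟩ := by
        intro k hk h1 h2
        simp only [hη]
        exact dif_pos h2
      have hpre : ∀ j : ℕ, ∀ hjle : j ≤ s,
          psum 1 η ⟨j, by omega⟩ = psum 1 p.1 ⟨j, by omega⟩ :=
        psum_congr 1 η p.1 s hagree (by omega) (le_refl s)
      simp only [hFP, mem_coe, mem_filter, mem_univ, true_and]
      intro j
      constructor
      · intro hjs
        have h1 := hpre (j : ℕ) hjs
        have h2 := hmaxp.1 ⟨(j : ℕ), by omega⟩
        have hj : j = (⟨(j : ℕ), j.isLt⟩ : Fin (M + 1)) := rfl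
        rw [hj]
        rw [h1]
        exact h2
      · intro hjs
        have hsM : s < M := hs
        have hstep : psum 1 η ⟨s + 1, by omega⟩ =
            psum 1 η ⟨s, by omega⟩ + sgn (η ⟨s, hsM⟩) := psum_mk_succ 1 η s hsM
        have hηs : η ⟨s, hsM⟩ = true := by
          simp only [hη]
          simp
        have hends : psum 1 η ⟨s, by omega⟩ = (n : ℤ) := by
          rw [hpre s (le_refl s)]
          exact hendp
        have hj : j = (⟨s + 1, by omega⟩ : Fin (M + 1)) := by
          apply Fin.ext; exact hjs
        rw [hj, hstep, hηs, hends]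
        rfl
    · intro p hp p' hp' heq
      have H := fun (j : Fin M) => congrFun heq j
      apply Prod.ext
      · funext l
        have h := H ⟨(l : ℕ), by omega⟩
        dsimp only at h
        simp only [dif_pos (show ((⟨(l : ℕ), by omega⟩ : Fin M) : ℕ) < s from l.isLt)] at h
        simpa only [Fin.eta] using h
      · funext r
        have h := H ⟨s + 1 + (r : ℕ), by omega⟩
        dsimp only at h
        simp only [dif_neg (show ¬ ((⟨s + 1 + (r : ℕ), by omega⟩ : Fin M) : ℕ) < s by
              show ¬ (s + 1 + (r : ℕ) < s); omega),
            dif_neg (show ¬ ((⟨s + 1 + (r : ℕ), by omega⟩ : Fin M) : ℕ) = s by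
              show ¬ (s + 1 + (r : ℕ) = s); omega)] at h
        have hrlt := r.isLt
        have hmk : (⟨s + 1 + (r : ℕ) - s - 1, by omega⟩ : Fin (M - 1 - s)) = r := by
          apply Fin.ext
          show s + 1 + (r : ℕ) - s - 1 = (r : ℕ)
          omega
        rw [hmk] at h
        exact h
  have hdisj : ∀ a ∈ range M, ∀ b ∈ range M, a ≠ b → Disjoint (FP a) (FP b) := by
    have aux : ∀ a b : ℕ, a < b → b < M → Disjoint (FP a) (FP b) := by
      intro a b hab hbM
      rw [disjoint_left]
      intro η hηa hηb
      simp only [hFP, mem_filter, mem_univ, true_and] at hηa hηb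
      have h1 := (hηa ⟨a + 1, by omega⟩).2 rfl
      have h2 := (hηb ⟨a + 1, by omega⟩).1 (show a + 1 ≤ b by omega)
      omega
    intro a ha b hb hab
    rw [mem_range] at ha hb
    rcases Nat.lt_or_ge a b with h | h
    · exact aux a b h hb
    · exact (aux b a (by omega) ha).symm
  calc ∑ s ∈ range M, (good n s).card * 2 ^ (M - 1 - s)
      ≤ ∑ s ∈ range M, (FP s).card := sum_le_sum hinj
    _ = ((range M).biUnion FP).card := (card_biUnion hdisj).symm
    _ ≤ (univ : Finset (Fin M → Bool)).card := card_le_card (subset_univ _)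
    _ = 2 ^ M := by simp [card_univ]

lemma choose_sum_aux (M m : ℕ) :
    ∑ r ∈ range (m + 1), (M + 1).choose r + M.choose m = 2 * ∑ r ∈ range (m + 1), M.choose r := by
  induction m with
  | zero => simp
  | succ m ih =>
      rw [sum_range_succ, sum_range_succ (f := fun r => M.choose r)]
      have hp : (M + 1).choose (m + 1) = M.choose m + M.choose (m + 1) :=
        Nat.choose_succ_succ' M m
      omega

lemma choose_geom (m M : ℕ) :
    ∑ k ∈ range M, k.choose m * 2 ^ (M - 1 - k) + ∑ r ∈ range (m + 1), M.choose r = 2 ^ M := by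
  induction M with
  | zero =>
      simp only [range_zero, sum_empty, zero_add, pow_zero]
      rw [sum_eq_single 0 (fun r _ hr => Nat.choose_eq_zero_of_lt (by omega)) (by simp)]
      simp
  | succ M ih =>
      have hstep : ∑ k ∈ range (M + 1), k.choose m * 2 ^ (M - k) =
          2 * (∑ k ∈ range M, k.choose m * 2 ^ (M - 1 - k)) + M.choose m := by
        rw [sum_range_succ]
        have hcong : ∀ k ∈ range M, k.choose m * 2 ^ (M - k) =
            2 * (k.choose m * 2 ^ (M - 1 - k)) := by
          intro k hk
          rw [mem_range] at hk
          have : M - k = (M - 1 - k) + 1 := by omega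
          rw [this, pow_succ]
          ring
        rw [sum_congr rfl hcong, ← mul_sum]
        simp
      have haux := choose_sum_aux M m
      have hpow : 2 ^ (M + 1) = 2 * 2 ^ M := by rw [pow_succ]; ring
      have hM1 : ∀ k, M + 1 - 1 - k = M - k := by intro k; omega
      calc ∑ k ∈ range (M + 1), k.choose m * 2 ^ (M + 1 - 1 - k) +
            ∑ r ∈ range (m + 1), (M + 1).choose r
          = ∑ k ∈ range (M + 1), k.choose m * 2 ^ (M - k) +
            ∑ r ∈ range (m + 1), (M + 1).choose r := by
            have hc : ∀ k ∈ range (M + 1), k.choose m * 2 ^ (M + 1 - 1 - k) =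
                k.choose m * 2 ^ (M - k) := fun k _ => by rw [hM1]
            rw [sum_congr rfl hc]
        _ = 2 ^ (M + 1) := by omega

lemma sum_div_le (a : ℕ → ℕ) (M : ℕ)
    (h : ∑ k ∈ range M, a k * 2 ^ (M - 1 - k) ≤ 2 ^ M) :
    ∑ k ∈ range M, (a k : ℝ) / 2 ^ k ≤ 2 := by
  rcases Nat.eq_zero_or_pos M with rfl | hM
  · simp
  obtain ⟨N, rfl⟩ : ∃ N, M = N + 1 := ⟨M - 1, by omega⟩
  have key : ∀ k ∈ range (N + 1), (a k : ℝ) / 2 ^ k = ((a k * 2 ^ (N - k) : ℕ) : ℝ) / 2 ^ N := by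
    intro k hk
    rw [mem_range] at hk
    push_cast
    rw [div_eq_div_iff (by positivity) (by positivity)]
    have : (2 : ℝ) ^ (N - k) * 2 ^ k = 2 ^ N := by
      rw [← pow_add]
      congr 1
      omega
    rw [mul_assoc, this]
  rw [sum_congr rfl key, ← sum_div]
  rw [div_le_iff₀ (by positivity)]
  have hcast : (∑ k ∈ range (N + 1), ((a k * 2 ^ (N - k) : ℕ) : ℝ)) =
      ((∑ k ∈ range (N + 1), a k * 2 ^ (N - k) : ℕ) : ℝ) := by push_cast; ring
  rw [hcast]
  have h2 : ((∑ k ∈ range (N + 1), a k * 2 ^ (N - k) : ℕ) : ℝ) ≤ ((2 ^ (N + 1) : ℕ) : ℝ) := by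
    exact_mod_cast (by simpa using h)
  calc ((∑ k ∈ range (N + 1), a k * 2 ^ (N - k) : ℕ) : ℝ) ≤ ((2 ^ (N + 1) : ℕ) : ℝ) := h2
    _ = 2 * 2 ^ N := by push_cast; ring

lemma choose_div_pow_sum_le (s M : ℕ) :
    ∑ t ∈ range M, (t.choose s : ℝ) / 2 ^ t ≤ 2 := by
  apply sum_div_le (fun t => t.choose s) M
  have := choose_geom s M
  omega


end RW

open Finset in
theorem potential_le_sup_mul_tsum (n : ℕ) (hn : 20 ≤ n) :
    gridPotential n ((n : ℤ), (n : ℤ)) (1, 1) ≤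
      2 * (⨆ t : ℕ, walkProb 1 t
            (fun w => endsAt (n : ℤ) w ∧ maxEq (n : ℤ) w ∧ minGE 1 w)) *
        ∑' t : ℕ, walkProb 1 t
            (fun w => endsAt (n : ℤ) w ∧ maxEq (n : ℤ) w ∧ minGE 1 w) := by
  classical
  have hn1 : 1 ≤ n := by omega
  set q : ℕ → ℝ := fun s => walkProb 1 s
      (fun w => endsAt (n : ℤ) w ∧ maxEq (n : ℤ) w ∧ minGE 1 w) with hqdef
  have hq_eq : ∀ s, q s = ((RW.good n s).card : ℝ) / 2 ^ s := by
    intro s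
    rw [hqdef]
    simp only [walkProb]
    rw [RW.walkCount_eq_good]
  have hq0 : ∀ s, 0 ≤ q s := by
    intro s; rw [hq_eq]; positivity
  have hq1 : ∀ s, q s ≤ 1 := by
    intro s
    rw [hq_eq, div_le_one (by positivity)]
    exact_mod_cast RW.good_card_le n s
  have hbdd : BddAbove (Set.range q) := ⟨1, by rintro _ ⟨s, rfl⟩; exact hq1 s⟩
  have hqS : ∀ s, q s ≤ ⨆ t, q t := fun s => le_ciSup hbdd s
  set S := ⨆ t, q t with hSdef
  have hS0 : 0 ≤ S := le_trans (hq0 0) (hqS 0)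
  -- summability of q
  have hqpartial : ∀ M, ∑ s ∈ range M, q s ≤ 2 := by
    intro M
    have h1 := RW.sum_div_le (fun s => (RW.good n s).card) M (RW.firstpassage n M)
    calc ∑ s ∈ range M, q s = ∑ s ∈ range M, ((RW.good n s).card : ℝ) / 2 ^ s :=
          sum_congr rfl (fun s _ => hq_eq s)
      _ ≤ 2 := h1
  have hsq : Summable q := summable_of_sum_range_le hq0 hqpartial
  set Q := ∑' s, q s with hQdef
  have hpartialQ : ∀ M, ∑ s ∈ range M, q s ≤ Q :=
    fun M => Summable.sum_le_tsum (range M) (fun i _ => hq0 i) hsq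
  -- the majorant sequence
  set r : ℕ → ℝ := fun t => ∑ s ∈ range (t + 1), (t.choose s : ℝ) / 2 ^ t * q (t - s) with hrdef
  have hr0 : ∀ t, 0 ≤ r t := by
    intro t
    apply sum_nonneg
    intro s _
    have := hq0 (t - s)
    positivity
  -- pointwise bound
  have hpoint : ∀ t, (gridHitCount n (1, 1) ((n : ℤ), (n : ℤ)) t : ℝ) / 4 ^ t ≤ S * r t := by
    intro t
    have hnat : gridHitCount n (1, 1) ((n : ℤ), (n : ℤ)) t ≤
        ∑ s ∈ range (t + 1), t.choose s * ((RW.good n s).card * (RW.good n (t - s)).card) :=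
      le_trans (RW.gridHitCount_le_card n t) (RW.grid_card_le n t hn1)
    have hcast : (gridHitCount n (1, 1) ((n : ℤ), (n : ℤ)) t : ℝ) / 4 ^ t ≤
        (∑ s ∈ range (t + 1),
          (t.choose s : ℝ) * ((RW.good n s).card * (RW.good n (t - s)).card)) / 4 ^ t := by
      apply div_le_div_of_nonneg_right ?_ (by positivity)
      · exact_mod_cast hnat
    rw [sum_div] at hcast
    refine le_trans hcast ?_
    have hterm : ∀ s ∈ range (t + 1),
        (t.choose s : ℝ) * ((RW.good n s).card * (RW.good n (t - s)).card) / 4 ^ t ≤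
          S * ((t.choose s : ℝ) / 2 ^ t * q (t - s)) := by
      intro s hs
      rw [mem_range] at hs
      have heq : (t.choose s : ℝ) * ((RW.good n s).card * (RW.good n (t - s)).card) / 4 ^ t =
          (t.choose s : ℝ) / 2 ^ t * q s * q (t - s) := by
        rw [hq_eq, hq_eq]
        have h4 : (4 : ℝ) ^ t = 2 ^ t * (2 ^ s * 2 ^ (t - s)) := by
          rw [← pow_add, show s + (t - s) = t by omega, show (4 : ℝ) = 2 * 2 by norm_num,
            mul_pow]
        rw [h4]
        field_simp
      rw [heq]
      have hfac : 0 ≤ (t.choose s : ℝ) / 2 ^ t * q (t - s) := by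
        have := hq0 (t - s); positivity
      calc (t.choose s : ℝ) / 2 ^ t * q s * q (t - s) =
            q s * ((t.choose s : ℝ) / 2 ^ t * q (t - s)) := by ring
        _ ≤ S * ((t.choose s : ℝ) / 2 ^ t * q (t - s)) :=
            mul_le_mul_of_nonneg_right (hqS s) hfac
    calc ∑ s ∈ range (t + 1),
          (t.choose s : ℝ) * ((RW.good n s).card * (RW.good n (t - s)).card) / 4 ^ t
        ≤ ∑ s ∈ range (t + 1), S * ((t.choose s : ℝ) / 2 ^ t * q (t - s)) :=
          sum_le_sum hterm
      _ = S * r t := by rw [hrdef, ← mul_sum]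
  -- partial sums of r
  have hr2 : ∀ t, r t = ∑ s ∈ range (t + 1), (t.choose s : ℝ) / 2 ^ t * q s := by
    intro t
    rw [hrdef]
    dsimp only
    have h1 : ∀ s ∈ range (t + 1),
        (t.choose s : ℝ) / 2 ^ t * q (t - s) =
        (fun s' => (t.choose (t - s') : ℝ) / 2 ^ t * q s') (t + 1 - 1 - s) := by
      intro s hs
      rw [mem_range] at hs
      simp only
      rw [show t + 1 - 1 - s = t - s by omega, show t - (t - s) = s by omega]
    rw [sum_congr rfl h1,
      Finset.sum_range_reflect (fun s' => (t.choose (t - s') : ℝ) / 2 ^ t * q s') (t + 1)]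
    apply sum_congr rfl
    intro s hs
    rw [mem_range] at hs
    rw [Nat.choose_symm (by omega : s ≤ t)]
  have hrpartial : ∀ M, ∑ t ∈ range M, r t ≤ 2 * Q := by
    intro M
    have hinn : ∀ t ∈ range M, r t =
        ∑ s ∈ range M, (if s ≤ t then (t.choose s : ℝ) / 2 ^ t * q s else 0) := by
      intro t ht
      rw [mem_range] at ht
      rw [hr2]
      have e1 : ∑ s ∈ range (t + 1), (t.choose s : ℝ) / 2 ^ t * q s =
          ∑ s ∈ range (t + 1), (if s ≤ t then (t.choose s : ℝ) / 2 ^ t * q s else 0) := by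
        apply sum_congr rfl
        intro s hs
        rw [mem_range] at hs
        rw [if_pos (by omega)]
      rw [e1]
      apply sum_subset (by rw [range_subset_range]; omega)
      intro s hsM hs
      rw [mem_range] at hs
      rw [if_neg (by omega)]
    calc ∑ t ∈ range M, r t
        = ∑ t ∈ range M, ∑ s ∈ range M,
            (if s ≤ t then (t.choose s : ℝ) / 2 ^ t * q s else 0) := sum_congr rfl hinn
      _ = ∑ s ∈ range M, ∑ t ∈ range M,
            (if s ≤ t then (t.choose s : ℝ) / 2 ^ t * q s else 0) := sum_comm
      _ ≤ ∑ s ∈ range M, 2 * q s := by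
          apply sum_le_sum
          intro s _
          have hterm : ∀ t ∈ range M,
              (if s ≤ t then (t.choose s : ℝ) / 2 ^ t * q s else 0) ≤
                (t.choose s : ℝ) / 2 ^ t * q s := by
            intro t _
            split
            · exact le_refl _
            · have := hq0 s; positivity
          calc ∑ t ∈ range M, (if s ≤ t then (t.choose s : ℝ) / 2 ^ t * q s else 0)
              ≤ ∑ t ∈ range M, (t.choose s : ℝ) / 2 ^ t * q s := sum_le_sum hterm
            _ = (∑ t ∈ range M, (t.choose s : ℝ) / 2 ^ t) * q s := by rw [sum_mul]
            _ ≤ 2 * q s :=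
                mul_le_mul_of_nonneg_right (RW.choose_div_pow_sum_le s M) (hq0 s)
      _ = 2 * ∑ s ∈ range M, q s := by rw [mul_sum]
      _ ≤ 2 * Q := by
          have := hpartialQ M
          linarith
  have hsr : Summable r := summable_of_sum_range_le hr0 hrpartial
  have hrQ : ∑' t, r t ≤ 2 * Q := Real.tsum_le_of_sum_range_le hr0 hrpartial
  have hmaj : Summable (fun t => S * r t) := hsr.mul_left S
  have hNs : Summable (fun t => (gridHitCount n (1, 1) ((n : ℤ), (n : ℤ)) t : ℝ) / 4 ^ t) :=
    Summable.of_nonneg_of_le (fun t => by positivity) hpoint hmaj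
  calc gridPotential n ((n : ℤ), (n : ℤ)) (1, 1)
      = ∑' t, (gridHitCount n (1, 1) ((n : ℤ), (n : ℤ)) t : ℝ) / 4 ^ t := rfl
    _ ≤ ∑' t, S * r t := Summable.tsum_le_tsum hpoint hNs hmaj
    _ = S * ∑' t, r t := tsum_mul_left
    _ ≤ S * (2 * Q) := mul_le_mul_of_nonneg_left hrQ hS0
    _ = 2 * S * Q := by ring
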